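/- Let r ≥ 2 and k ≥ 2^r be integers. Then every r-partite r-graph satisfying the (r,k)-cover property has a transversal cover; in particular, its cover number is at most r. -/

import Mathlib

/-- A set of vertices `T` covers a hypergraph with edge family `E` if it meets every edge. -/
def IsCover {V : Type*} (E : Set (Set V)) (T : Set V) : Prop :=
  ∀ e ∈ E, (e ∩ T).Nonempty

/-- The cover number of a hypergraph: minimum size of a cover. -/
noncomputable def coverNumber {V : Type*} (E : Set (Set V)) : ℕ :=
  sInf {n | ∃ T : Set V, T.ncard = n ∧ IsCover E T}

/-- The `(k,ℓ)`-cover property: any at most `k` edges have a cover of size at most `ℓ`. -/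
def CoverProperty {V : Type*} (E : Set (Set V)) (k ℓ : ℕ) : Prop :=
  ∀ S ⊆ E, S.ncard ≤ k → ∃ T : Set V, T.ncard ≤ ℓ ∧ IsCover S T

/-- `E` is an `r`-partite `r`-graph w.r.t. the partition `part`. -/
def IsPartite {V : Type*} (r : ℕ) (part : V → Fin r) (E : Set (Set V)) : Prop :=
  ∀ e ∈ E, ∀ i : Fin r, (e ∩ part ⁻¹' {i}).ncard = 1

/-- A transversal cover: a cover containing exactly one vertex from each part. -/
def IsTransversalCover {V : Type*} (r : ℕ) (part : V → Fin r) (E : Set (Set V))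
    (T : Set V) : Prop :=
  IsCover E T ∧ ∀ i : Fin r, (T ∩ part ⁻¹' {i}).ncard = 1

/-- The `(r,k)`-cover property: any at most `k` edges have a transversal cover. -/
def PartiteCoverProperty {V : Type*} (r : ℕ) (part : V → Fin r) (E : Set (Set V))
    (k : ℕ) : Prop :=
  ∀ S ⊆ E, S.ncard ≤ k → ∃ T : Set V, IsTransversalCover r part S T

/-- The spanning subgraph of `G` consisting of the edges of colour `i`. -/
def colorSubgraph {V : Type*} (G : SimpleGraph V) {r : ℕ} (c : Sym2 V → Fin r)
    (i : Fin r) : SimpleGraph V where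
  Adj u v := G.Adj u v ∧ c s(u, v) = i
  symm := ⟨fun u v h => ⟨h.1.symm, by rw [Sym2.eq_swap]; exact h.2⟩⟩
  loopless := ⟨fun v h => G.loopless.1 v h.1⟩

open Finset

/-- Key lemma (Alon-type tensor argument): a family of `r`-tuples each having a
"private" tuple that misses it in every coordinate but meets every other member
has at most `2^r` members. -/
lemma system_card_le {V : Type*} [Fintype V] {ι : Type*} [Fintype ι] {r : ℕ}
    (f x : ι → (Fin r → V))
    (hmiss : ∀ j i, x j i ≠ f j i)
    (hhit : ∀ j j', j ≠ j' → ∃ i, x j i = f j' i) :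
    Fintype.card ι ≤ 2 ^ r := by
  classical
  set t : V → ℝ := fun v => ((Fintype.equivFin V v : ℕ) : ℝ) with ht_def
  have ht : Function.Injective t := by
    intro a b hab
    have h1 : ((Fintype.equivFin V a : ℕ) : ℝ) = ((Fintype.equivFin V b : ℕ) : ℝ) := hab
    have h2 : (Fintype.equivFin V a : ℕ) = (Fintype.equivFin V b : ℕ) := by exact_mod_cast h1
    exact (Fintype.equivFin V).injective (Fin.val_injective h2)
  set u : (Fin r → V) → ((Fin r → Bool) → ℝ) :=
    fun g ε => ∏ i, (if ε i then t (g i) else 1) with hu_def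
  have pairing : ∀ g y : Fin r → V,
      ∑ ε : Fin r → Bool, u g ε * ∏ i, (if ε i then (-1 : ℝ) else t (y i))
        = ∏ i, (t (y i) - t (g i)) := by
    intro g y
    have h1 : ∀ ε : Fin r → Bool,
        u g ε * ∏ i, (if ε i then (-1 : ℝ) else t (y i))
          = ∏ i, ((if ε i then t (g i) else 1) * (if ε i then (-1 : ℝ) else t (y i))) := by
      intro ε
      exact (Finset.prod_mul_distrib).symm
    rw [Finset.sum_congr rfl fun ε _ => h1 ε]
    have h2 : ∏ i : Fin r, ∑ b : Bool,
        ((if b then t (g i) else 1) * (if b then (-1 : ℝ) else t (y i)))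
        = ∑ p ∈ Fintype.piFinset (fun _ : Fin r => (Finset.univ : Finset Bool)),
            ∏ i, ((if p i then t (g i) else 1) * (if p i then (-1 : ℝ) else t (y i))) :=
      Finset.prod_univ_sum _ _
    rw [Fintype.piFinset_univ] at h2
    rw [← h2]
    refine Finset.prod_congr rfl fun i _ => ?_
    rw [Fintype.sum_bool]
    simp
    ring
  have hli : LinearIndependent ℝ (fun j : ι => u (f j)) := by
    rw [Fintype.linearIndependent_iff]
    intro c hc j
    have hc' : ∀ ε : Fin r → Bool, ∑ j', c j' * u (f j') ε = 0 := by
      intro ε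
      have := congrFun hc ε
      simpa [Finset.sum_apply] using this
    have h0 : ∑ j', c j' * ∏ i, (t (x j i) - t (f j' i)) = 0 := by
      have e1 : ∀ j', c j' * ∏ i, (t (x j i) - t (f j' i))
          = ∑ ε : Fin r → Bool, c j' * (u (f j') ε * ∏ i, (if ε i then (-1:ℝ) else t (x j i))) := by
        intro j'
        rw [← Finset.mul_sum, pairing (f j') (x j)]
      rw [Finset.sum_congr rfl fun j' _ => e1 j']
      rw [Finset.sum_comm]
      have e2 : ∀ ε : Fin r → Bool,
          ∑ j', c j' * (u (f j') ε * ∏ i, (if ε i then (-1:ℝ) else t (x j i)))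
            = (∑ j', c j' * u (f j') ε) * ∏ i, (if ε i then (-1:ℝ) else t (x j i)) := by
        intro ε
        rw [Finset.sum_mul]
        exact Finset.sum_congr rfl fun j' _ => by ring
      rw [Finset.sum_congr rfl fun ε _ => e2 ε]
      simp [hc']
    have hsingle : c j * ∏ i, (t (x j i) - t (f j i)) = 0 := by
      rw [← h0]
      symm
      refine Finset.sum_eq_single_of_mem j (Finset.mem_univ j) ?_
      intro j' _ hne
      obtain ⟨i, hi⟩ := hhit j j' (fun h => hne (h.symm ▸ rfl))
      have : t (x j i) - t (f j' i) = 0 := by rw [hi, sub_self]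
      rw [Finset.prod_eq_zero (Finset.mem_univ i) this, mul_zero]
    have hprod : ∏ i, (t (x j i) - t (f j i)) ≠ 0 := by
      rw [Finset.prod_ne_zero_iff]
      intro i _
      exact sub_ne_zero.mpr fun h => hmiss j i (ht h)
    exact (mul_eq_zero.mp hsingle).resolve_right hprod
  have hcard := hli.fintype_card_le_finrank
  rwa [Module.finrank_fintype_fun_eq_card, Fintype.card_fun, Fintype.card_bool,
    Fintype.card_fin] at hcard


/-- for `k ≥ 2^r`, every `r`-partite `r`-graph with the `(r,k)`-cover
property has a transversal cover; in particular its cover number is at most `r`. -/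
theorem stmt14 (r k : ℕ) (hr : 2 ≤ r) (hk : 2 ^ r ≤ k)
    {V : Type*} [Fintype V] (part : V → Fin r) (E : Set (Set V))
    (hpart : IsPartite r part E) (hprop : PartiteCoverProperty r part E k) :
    (∃ T : Set V, IsTransversalCover r part E T) ∧ coverNumber E ≤ r := by
  classical
  have hex : ∃ T : Set V, IsTransversalCover r part E T := by
    by_contra hno
    -- take a subfamily of E with no transversal cover, of minimal cardinality
    set A : Set ℕ := {n | ∃ S : Set (Set V), S ⊆ E ∧
      (¬ ∃ T : Set V, IsTransversalCover r part S T) ∧ S.ncard = n} with hA_def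
    have hAne : A.Nonempty := ⟨E.ncard, E, subset_rfl, hno, rfl⟩
    obtain ⟨S, hSE, hSno, hScard⟩ := Nat.sInf_mem hAne
    -- every strict subfamily obtained by deleting one edge has a transversal cover
    have hTCmin : ∀ e ∈ S, ∃ T : Set V, IsTransversalCover r part (S \ {e}) T := by
      intro e he
      by_contra h'
      have hmem : (S \ {e}).ncard ∈ A :=
        ⟨S \ {e}, (Set.diff_subset).trans hSE, h', rfl⟩
      have hlt : (S \ {e}).ncard < S.ncard :=
        Set.ncard_diff_singleton_lt_of_mem he
      have := Nat.sInf_le hmem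
      omega
    haveI : Fintype ↥S := (Set.toFinite S).fintype
    -- the tuple of vertices of each edge
    have hfex : ∀ j : ↥S, ∀ i : Fin r, ∃ a : V, (j : Set V) ∩ part ⁻¹' {i} = {a} :=
      fun j i => Set.ncard_eq_one.mp (hpart j.1 (hSE j.2) i)
    set f : ↥S → Fin r → V := fun j i => (hfex j i).choose with hf_def
    have hf : ∀ (j : ↥S) (i : Fin r), (j : Set V) ∩ part ⁻¹' {i} = {f j i} :=
      fun j i => (hfex j i).choose_spec
    -- the transversal cover of S minus one edge
    set Tsel : ↥S → Set V := fun j => (hTCmin j.1 j.2).choose with hTsel_def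
    have hTsel : ∀ j : ↥S, IsTransversalCover r part (S \ {j.1}) (Tsel j) :=
      fun j => (hTCmin j.1 j.2).choose_spec
    have hxex : ∀ j : ↥S, ∀ i : Fin r, ∃ a : V, Tsel j ∩ part ⁻¹' {i} = {a} :=
      fun j i => Set.ncard_eq_one.mp ((hTsel j).2 i)
    set x : ↥S → Fin r → V := fun j i => (hxex j i).choose with hx_def
    have hx : ∀ (j : ↥S) (i : Fin r), Tsel j ∩ part ⁻¹' {i} = {x j i} :=
      fun j i => (hxex j i).choose_spec
    -- the private transversal misses its own edge
    have hdisj : ∀ j : ↥S, (j : Set V) ∩ Tsel j = ∅ := by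
      intro j
      by_contra hne
      have hcov : IsTransversalCover r part S (Tsel j) := by
        refine ⟨?_, (hTsel j).2⟩
        intro g hg
        by_cases hge : g = (j : Set V)
        · subst hge
          exact Set.nonempty_iff_ne_empty.mpr hne
        · exact (hTsel j).1 g ⟨hg, hge⟩
      exact hSno ⟨Tsel j, hcov⟩
    have hmiss : ∀ (j : ↥S) (i : Fin r), x j i ≠ f j i := by
      intro j i hEq
      have hxmem : x j i ∈ Tsel j ∩ part ⁻¹' {i} := by rw [hx j i]; rfl
      have hfmem : f j i ∈ (j : Set V) ∩ part ⁻¹' {i} := by rw [hf j i]; rfl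
      have : f j i ∈ (j : Set V) ∩ Tsel j := ⟨hfmem.1, hEq ▸ hxmem.1⟩
      rw [hdisj j] at this
      exact this
    have hhit : ∀ j j' : ↥S, j ≠ j' → ∃ i, x j i = f j' i := by
      intro j j' hne
      have hne' : (j' : Set V) ≠ (j : Set V) := fun h => hne (Subtype.ext h.symm)
      obtain ⟨v, hv⟩ := (hTsel j).1 (j' : Set V) ⟨j'.2, hne'⟩
      refine ⟨part v, ?_⟩
      have h1 : v ∈ (j' : Set V) ∩ part ⁻¹' {part v} := ⟨hv.1, rfl⟩
      have h2 : v ∈ Tsel j ∩ part ⁻¹' {part v} := ⟨hv.2, rfl⟩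
      rw [hf j' (part v)] at h1
      rw [hx j (part v)] at h2
      rw [← h1, ← h2]
    have hcard := system_card_le f x hmiss hhit
    have hScard' : S.ncard = Fintype.card ↥S := by
      rw [← Nat.card_coe_set_eq, Nat.card_eq_fintype_card]
    have : S.ncard ≤ k := by omega
    obtain ⟨T, hT⟩ := hprop S hSE this
    exact hSno ⟨T, hT⟩
  obtain ⟨T, hT⟩ := hex
  refine ⟨⟨T, hT⟩, ?_⟩
  have h1 : coverNumber E ≤ T.ncard :=
    Nat.sInf_le ⟨T, rfl, hT.1⟩
  have h2 : T.ncard ≤ r := by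
    have := Set.ncard_le_ncard_of_injOn part (fun a _ => Set.mem_univ (part a))
      (fun a ha b hb hab => by
        have ha' : a ∈ T ∩ part ⁻¹' {part a} := ⟨ha, rfl⟩
        have hb' : b ∈ T ∩ part ⁻¹' {part a} := ⟨hb, by simp [hab]⟩
        obtain ⟨c, hc⟩ := Set.ncard_eq_one.mp (hT.2 (part a))
        rw [hc] at ha' hb'
        rw [ha', hb'])
      (Set.toFinite _)
    rwa [Set.ncard_univ, Nat.card_eq_fintype_card, Fintype.card_fin] at this
  omega
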